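/- Let Σ ∈ ℝ^{p×p} be positive definite with Ω = Σ^{−1}, b ∈ ℝ^p, σ > 0, and n, ñ positive integers. Define η_j^{(os)} = √n·b_j / √(Ω_{jj}·σ²) and η_j^{(ts)} = √n·b_j / √( (Ω_{jj}·bᵀΣb + b_j²)·(1 + n/ñ) + Ω_{jj}·σ² ). Then |η_j^{(ts)}| ≤ |η_j^{(os)}|, with strict inequality when b_j ≠ 0. Consequently, for every τ ≥ 0, the two-sample power Φ(|η_j^{(ts)}| − τ) + Φ(−|η_j^{(ts)}| − τ) is at most the one-sample power Φ(|η_j^{(os)}| − τ) + Φ(−|η_j^{(os)}| − τ), with strict inequality when b_j ≠ 0 and τ > 0. -/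

import Mathlib

open MeasureTheory ProbabilityTheory Filter Matrix Real Topology
open scoped ENNReal NNReal

noncomputable section

namespace ProxyData

def l0 {p : ℕ} (v : Fin p → ℝ) : ℕ := (Function.support v).ncard

def l1 {p : ℕ} (v : Fin p → ℝ) : ℝ := ∑ i, |v i|

def l2sq {p : ℕ} (v : Fin p → ℝ) : ℝ := ∑ i, (v i) ^ 2

def linf {p : ℕ} (v : Fin p → ℝ) : ℝ := ⨆ i, |v i|

def gaussianVec {p : ℕ} (S : Matrix (Fin p) (Fin p) ℝ) (hS : S.PosSemidef) :
    Measure (Fin p → ℝ) :=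
  (Measure.pi fun _ : Fin p => gaussianReal 0 1).map fun z =>
    ((hS.1.eigenvectorUnitary : Matrix (Fin p) (Fin p) ℝ) *
      diagonal ((↑) ∘ Real.sqrt ∘ hS.1.eigenvalues) *
      (star hS.1.eigenvectorUnitary : Matrix (Fin p) (Fin p) ℝ)) *ᵥ z

def EigBounds {p : ℕ} (S : Matrix (Fin p) (Fin p) ℝ) (C₁ : ℝ) : Prop :=
  S.IsSymm ∧ ∀ v : Fin p → ℝ, C₁⁻¹ * l2sq v ≤ v ⬝ᵥ S *ᵥ v ∧ v ⬝ᵥ S *ᵥ v ≤ C₁ * l2sq v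

def SubGaussianLaw (ν : Measure ℝ) (K : ℝ) : Prop :=
  ∀ l : ℕ, 1 ≤ l → (∫ x, |x| ^ l ∂ν) ^ ((l : ℝ)⁻¹) ≤ K * Real.sqrt l

def NoiseLaw (ν : Measure ℝ) (σ K : ℝ) : Prop :=
  IsProbabilityMeasure ν ∧ Integrable (fun x => x) ν ∧ Integrable (fun x => x ^ 2) ν ∧
    (∫ x, x ∂ν) = 0 ∧ (∫ x, x ^ 2 ∂ν) = σ ^ 2 ∧ SubGaussianLaw ν K

abbrev SampleSpace (p n m : ℕ) :=
  (Fin n → Fin p → ℝ) × (Fin n → ℝ) × (Fin m → Fin p → ℝ)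

def modelMeasure {p : ℕ} (n m : ℕ) (S : Matrix (Fin p) (Fin p) ℝ) (hS : S.PosSemidef)
    (ν : Measure ℝ) : Measure (SampleSpace p n m) :=
  (Measure.pi fun _ : Fin n => gaussianVec S hS).prod
    ((Measure.pi fun _ : Fin n => ν).prod (Measure.pi fun _ : Fin m => gaussianVec S hS))

def yVal {p n m : ℕ} (β : Fin p → ℝ) (ω : SampleSpace p n m) (i : Fin n) : ℝ :=
  (∑ j, ω.1 i j * β j) + ω.2.1 i

def Shat {p n m : ℕ} (β : Fin p → ℝ) (ω : SampleSpace p n m) : Fin p → ℝ :=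
  fun j => (∑ i, ω.1 i j * yVal β ω i) / n

def SigTilde {p n m : ℕ} (ω : SampleSpace p n m) : Matrix (Fin p) (Fin p) ℝ :=
  fun j k => (∑ i, ω.2.2 i j * ω.2.2 i k) / m

def gammaNN {p : ℕ} (S : Matrix (Fin p) (Fin p) ℝ) (β : Fin p → ℝ) (σ : ℝ) (n m : ℕ) : ℝ :=
  σ ^ 2 + (β ⬝ᵥ S *ᵥ β) * ((n : ℝ) / m + 1)

def lassoObj {p : ℕ} (A : Matrix (Fin p) (Fin p) ℝ) (s : Fin p → ℝ) (lam : ℝ)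
    (b : Fin p → ℝ) : ℝ :=
  (1 / 2) * (b ⬝ᵥ A *ᵥ b) - b ⬝ᵥ s + lam * l1 b

def IsLassoSol {p : ℕ} (A : Matrix (Fin p) (Fin p) ℝ) (s : Fin p → ℝ) (lam : ℝ)
    (bhat : Fin p → ℝ) : Prop :=
  ∀ b, lassoObj A s lam bhat ≤ lassoObj A s lam b

def DantzigFeas {p : ℕ} (A : Matrix (Fin p) (Fin p) ℝ) (t : Fin p → ℝ) (lam : ℝ)
    (w : Fin p → ℝ) : Prop :=
  linf (fun i => (A *ᵥ w) i - t i) ≤ lam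

def IsDantzigSol {p : ℕ} (A : Matrix (Fin p) (Fin p) ℝ) (t : Fin p → ℝ) (lam : ℝ)
    (w : Fin p → ℝ) : Prop :=
  DantzigFeas A t lam w ∧ ∀ w', DantzigFeas A t lam w' → l1 w ≤ l1 w'

def stdNormalCDF (t : ℝ) : ℝ := (gaussianReal 0 1 (Set.Iic t)).toReal

def BigOP {Ωs : ℕ → Type*} [∀ k, MeasurableSpace (Ωs k)] (μ : ∀ k, Measure (Ωs k))
    (X : ∀ k, Ωs k → ℝ) (r : ℕ → ℝ) : Prop :=
  ∀ ε : ℝ, 0 < ε → ∃ C : ℝ, 0 < C ∧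
    ∀ᶠ k in atTop, (μ k {ω | C * r k < |X k ω|}).toReal ≤ ε

def TendstoStdNormal {Ωs : ℕ → Type*} [∀ k, MeasurableSpace (Ωs k)] (μ : ∀ k, Measure (Ωs k))
    (X : ∀ k, Ωs k → ℝ) : Prop :=
  ∀ t : ℝ, Tendsto (fun k => (μ k {ω | X k ω ≤ t}).toReal) atTop (𝓝 (stdNormalCDF t))

def omegaCol {p : ℕ} (S : Matrix (Fin p) (Fin p) ℝ) (j : Fin p) : Fin p → ℝ := fun i => S⁻¹ i j

def zstat {p n m : ℕ} (S : Matrix (Fin p) (Fin p) ℝ) (β : Fin p → ℝ) (j : Fin p)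
    (ω : SampleSpace p n m) : ℝ :=
  omegaCol S j ⬝ᵥ (fun i => Shat β ω i - (S *ᵥ β) i)
    + omegaCol S j ⬝ᵥ ((S - SigTilde ω) *ᵥ β)

def Vts {p : ℕ} (S : Matrix (Fin p) (Fin p) ℝ) (β : Fin p → ℝ) (σ : ℝ) (n m : ℕ)
    (j : Fin p) : ℝ :=
  S⁻¹ j j * gammaNN S β σ n m / n + (β j) ^ 2 / n + (β j) ^ 2 / m


lemma stdNormalCDF_eq (t : ℝ) :
    stdNormalCDF t = ∫ x in Set.Iic t, gaussianPDFReal 0 1 x := by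
  rw [stdNormalCDF, gaussianReal_apply_eq_integral 0 one_ne_zero,
    ENNReal.toReal_ofReal]
  exact setIntegral_nonneg measurableSet_Iic fun x _ => gaussianPDFReal_nonneg 0 1 x

lemma gaussPDF_cont : Continuous (gaussianPDFReal 0 1) := by
  unfold gaussianPDFReal
  fun_prop

lemma gaussPDF_shift_le {τ t : ℝ} (hτ : 0 ≤ τ) (ht : -τ ≤ t) :
    gaussianPDFReal 0 1 (t + 2 * τ) ≤ gaussianPDFReal 0 1 t := by
  unfold gaussianPDFReal
  have h0 : (0 : ℝ) < (Real.sqrt (2 * Real.pi * (1 : ℝ≥0)))⁻¹ := by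
    rw [inv_pos]
    exact Real.sqrt_pos.2 (by positivity)
  apply mul_le_mul_of_nonneg_left _ h0.le
  apply Real.exp_le_exp.2
  have : t ^ 2 ≤ (t + 2 * τ) ^ 2 := by nlinarith
  push_cast
  nlinarith

lemma gaussPDF_shift_lt {τ t : ℝ} (hτ : 0 < τ) (ht : -τ < t) :
    gaussianPDFReal 0 1 (t + 2 * τ) < gaussianPDFReal 0 1 t := by
  unfold gaussianPDFReal
  have h0 : (0 : ℝ) < (Real.sqrt (2 * Real.pi * (1 : ℝ≥0)))⁻¹ := by
    rw [inv_pos]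
    exact Real.sqrt_pos.2 (by positivity)
  apply mul_lt_mul_of_pos_left _ h0
  apply Real.exp_lt_exp.2
  have : t ^ 2 < (t + 2 * τ) ^ 2 := by nlinarith
  push_cast
  nlinarith

lemma gaussPDF_even (t : ℝ) : gaussianPDFReal 0 1 (-t) = gaussianPDFReal 0 1 t := by
  unfold gaussianPDFReal
  ring_nf

lemma cdf_diff_eq (a b : ℝ) :
    stdNormalCDF b - stdNormalCDF a = ∫ x in a..b, gaussianPDFReal 0 1 x := by
  rw [stdNormalCDF_eq, stdNormalCDF_eq]
  exact intervalIntegral.integral_Iic_sub_Iic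
    ((integrable_gaussianPDFReal 0 1).integrableOn)
    ((integrable_gaussianPDFReal 0 1).integrableOn)

lemma power_key {x y τ : ℝ} (hx : 0 ≤ x) (hxy : x ≤ y) (hτ : 0 ≤ τ) :
    stdNormalCDF (x - τ) + stdNormalCDF (-x - τ)
      ≤ stdNormalCDF (y - τ) + stdNormalCDF (-y - τ) := by
  have h1 : stdNormalCDF (y - τ) - stdNormalCDF (x - τ)
      = ∫ t in (x - τ)..(y - τ), gaussianPDFReal 0 1 t := cdf_diff_eq _ _
  have h2 : stdNormalCDF (-x - τ) - stdNormalCDF (-y - τ)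
      = ∫ t in (x - τ)..(y - τ), gaussianPDFReal 0 1 (t + 2 * τ) := by
    rw [cdf_diff_eq]
    rw [intervalIntegral.integral_comp_add_right (gaussianPDFReal 0 1) (2 * τ)]
    have e1 : x - τ + 2 * τ = x + τ := by ring
    have e2 : y - τ + 2 * τ = y + τ := by ring
    rw [e1, e2]
    have := intervalIntegral.integral_comp_neg (f := gaussianPDFReal 0 1)
      (a := x + τ) (b := y + τ)
    simp only [gaussPDF_even] at this
    rw [this, show (-y - τ : ℝ) = -(y + τ) by ring, show (-x - τ : ℝ) = -(x + τ) by ring]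
  have hmono : (∫ t in (x - τ)..(y - τ), gaussianPDFReal 0 1 (t + 2 * τ))
      ≤ ∫ t in (x - τ)..(y - τ), gaussianPDFReal 0 1 t := by
    apply intervalIntegral.integral_mono_on (by linarith)
      ((gaussPDF_cont.comp (by continuity)).intervalIntegrable _ _)
      (gaussPDF_cont.intervalIntegrable _ _)
    intro t ht
    exact gaussPDF_shift_le hτ (by rcases ht with ⟨h, _⟩; linarith)
  linarith

lemma power_key_strict {x y τ : ℝ} (hx : 0 ≤ x) (hxy : x < y) (hτ : 0 < τ) :
    stdNormalCDF (x - τ) + stdNormalCDF (-x - τ)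
      < stdNormalCDF (y - τ) + stdNormalCDF (-y - τ) := by
  have h1 : stdNormalCDF (y - τ) - stdNormalCDF (x - τ)
      = ∫ t in (x - τ)..(y - τ), gaussianPDFReal 0 1 t := cdf_diff_eq _ _
  have h2 : stdNormalCDF (-x - τ) - stdNormalCDF (-y - τ)
      = ∫ t in (x - τ)..(y - τ), gaussianPDFReal 0 1 (t + 2 * τ) := by
    rw [cdf_diff_eq]
    rw [intervalIntegral.integral_comp_add_right (gaussianPDFReal 0 1) (2 * τ)]
    have e1 : x - τ + 2 * τ = x + τ := by ring
    have e2 : y - τ + 2 * τ = y + τ := by ring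
    rw [e1, e2]
    have := intervalIntegral.integral_comp_neg (f := gaussianPDFReal 0 1)
      (a := x + τ) (b := y + τ)
    simp only [gaussPDF_even] at this
    rw [this, show (-y - τ : ℝ) = -(y + τ) by ring, show (-x - τ : ℝ) = -(x + τ) by ring]
  have hmono : (∫ t in (x - τ)..(y - τ), gaussianPDFReal 0 1 (t + 2 * τ))
      < ∫ t in (x - τ)..(y - τ), gaussianPDFReal 0 1 t := by
    apply intervalIntegral.integral_lt_integral_of_continuousOn_of_le_of_exists_lt
      (by linarith)
      ((gaussPDF_cont.comp (by continuity)).continuousOn)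
      gaussPDF_cont.continuousOn
    · intro t ht
      exact gaussPDF_shift_le hτ.le (by rcases ht with ⟨h, _⟩; linarith)
    · refine ⟨y - τ, ⟨by linarith, le_refl _⟩, gaussPDF_shift_lt hτ (by linarith)⟩
  linarith


/-- the two-sample noncentrality is never larger in magnitude than the
one-sample one (strictly when `b_j ≠ 0`), and consequently the two-sample power never
exceeds the one-sample power (strictly when `b_j ≠ 0` and `τ > 0`). -/
theorem statement_18 {p : ℕ} (S : Matrix (Fin p) (Fin p) ℝ) (hS : S.PosDef)
    (b : Fin p → ℝ) (σ : ℝ) (hσ : 0 < σ) (n m : ℕ) (hn : 0 < n) (hm : 0 < m)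
    (j : Fin p) :
    |Real.sqrt n * b j /
        Real.sqrt ((S⁻¹ j j * (b ⬝ᵥ S *ᵥ b) + (b j) ^ 2) * (1 + (n : ℝ) / m)
          + S⁻¹ j j * σ ^ 2)|
      ≤ |Real.sqrt n * b j / Real.sqrt (S⁻¹ j j * σ ^ 2)| ∧
    (b j ≠ 0 →
      |Real.sqrt n * b j /
          Real.sqrt ((S⁻¹ j j * (b ⬝ᵥ S *ᵥ b) + (b j) ^ 2) * (1 + (n : ℝ) / m)
            + S⁻¹ j j * σ ^ 2)|
        < |Real.sqrt n * b j / Real.sqrt (S⁻¹ j j * σ ^ 2)|) ∧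
    ∀ τ : ℝ, 0 ≤ τ →
      (stdNormalCDF (|Real.sqrt n * b j /
            Real.sqrt ((S⁻¹ j j * (b ⬝ᵥ S *ᵥ b) + (b j) ^ 2) * (1 + (n : ℝ) / m)
              + S⁻¹ j j * σ ^ 2)| - τ)
          + stdNormalCDF (-|Real.sqrt n * b j /
            Real.sqrt ((S⁻¹ j j * (b ⬝ᵥ S *ᵥ b) + (b j) ^ 2) * (1 + (n : ℝ) / m)
              + S⁻¹ j j * σ ^ 2)| - τ)
        ≤ stdNormalCDF (|Real.sqrt n * b j / Real.sqrt (S⁻¹ j j * σ ^ 2)| - τ)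
          + stdNormalCDF (-|Real.sqrt n * b j / Real.sqrt (S⁻¹ j j * σ ^ 2)| - τ)) ∧
      (b j ≠ 0 → 0 < τ →
        stdNormalCDF (|Real.sqrt n * b j /
              Real.sqrt ((S⁻¹ j j * (b ⬝ᵥ S *ᵥ b) + (b j) ^ 2) * (1 + (n : ℝ) / m)
                + S⁻¹ j j * σ ^ 2)| - τ)
            + stdNormalCDF (-|Real.sqrt n * b j /
              Real.sqrt ((S⁻¹ j j * (b ⬝ᵥ S *ᵥ b) + (b j) ^ 2) * (1 + (n : ℝ) / m)
                + S⁻¹ j j * σ ^ 2)| - τ)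
          < stdNormalCDF (|Real.sqrt n * b j / Real.sqrt (S⁻¹ j j * σ ^ 2)| - τ)
            + stdNormalCDF (-|Real.sqrt n * b j / Real.sqrt (S⁻¹ j j * σ ^ 2)| - τ)) :=
  by
  have hΩ : 0 < S⁻¹ j j := by
    have h := hS.inv.dotProduct_mulVec_pos (x := Pi.single j 1) (by
      intro hcon
      have := congrFun hcon j
      simp at this)
    simpa [dotProduct, mulVec, Pi.single_apply, Finset.sum_ite_eq] using h
  have hq : 0 ≤ b ⬝ᵥ S *ᵥ b := by
    have := hS.posSemidef.dotProduct_mulVec_nonneg b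
    simpa using this
  have hr : (0 : ℝ) ≤ (n : ℝ) / m := by positivity
  set A : ℝ := S⁻¹ j j * σ ^ 2 with hA_def
  set D : ℝ := (S⁻¹ j j * (b ⬝ᵥ S *ᵥ b) + (b j) ^ 2) * (1 + (n : ℝ) / m) + S⁻¹ j j * σ ^ 2
    with hD_def
  have hA : 0 < A := by positivity
  have hAD : A ≤ D := by
    rw [hA_def, hD_def]
    nlinarith [mul_nonneg (add_nonneg (mul_nonneg hΩ.le hq) (sq_nonneg (b j)))
      (show (0 : ℝ) ≤ 1 + (n : ℝ) / m by linarith)]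
  have hsA : 0 < Real.sqrt A := Real.sqrt_pos.2 hA
  have hsAD : Real.sqrt A ≤ Real.sqrt D := Real.sqrt_le_sqrt hAD
  have habs : ∀ c : ℝ, 0 ≤ c → |Real.sqrt n * b j / Real.sqrt c|
      = |Real.sqrt n * b j| / Real.sqrt c := by
    intro c hc
    rw [abs_div, abs_of_nonneg (Real.sqrt_nonneg c)]
  have hDnn : (0 : ℝ) ≤ D := le_trans hA.le hAD
  have hle : |Real.sqrt n * b j / Real.sqrt D| ≤ |Real.sqrt n * b j / Real.sqrt A| := by
    rw [habs D hDnn, habs A hA.le]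
    exact div_le_div_of_nonneg_left (abs_nonneg _) hsA hsAD
  have hlt : b j ≠ 0 → |Real.sqrt n * b j / Real.sqrt D|
      < |Real.sqrt n * b j / Real.sqrt A| := by
    intro hb
    have hADlt : A < D := by
      have hb2 : 0 < (b j) ^ 2 := by positivity
      rw [hA_def, hD_def]
      nlinarith [mul_pos (add_pos_of_nonneg_of_pos (mul_nonneg hΩ.le hq) hb2)
        (show (0 : ℝ) < 1 + (n : ℝ) / m by linarith)]
    have hsADlt : Real.sqrt A < Real.sqrt D := Real.sqrt_lt_sqrt hA.le hADlt
    have hnum : 0 < |Real.sqrt n * b j| := by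
      have hn' : (0 : ℝ) < Real.sqrt n := Real.sqrt_pos.2 (by exact_mod_cast hn)
      rw [abs_pos]
      exact mul_ne_zero hn'.ne' hb
    rw [habs D hDnn, habs A hA.le]
    exact div_lt_div_of_pos_left hnum hsA hsADlt
  refine ⟨hle, hlt, fun τ hτ => ⟨?_, fun hb hτ' => ?_⟩⟩
  · exact power_key (abs_nonneg _) hle hτ
  · exact power_key_strict (abs_nonneg _) (hlt hb) hτ'

end ProxyData
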